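/- Resolution of a Fisher–Hartwig type singularity in Toeplitz determinants: let f : ℂ → ℂ be continuous on the unit circle, let κ ≥ 1 and n ≥ 1 be integers. Then D_n[ζ ↦ ζ^κ f(ζ)] = (−1)^{κn} (1/(2πi))^κ ∮_{|λ_1|=1} ⋯ ∮_{|λ_κ|=1} (∏_{j=1}^κ λ_j^{n−1} dλ_j) · D_n[ζ ↦ p_λ(ζ) f(ζ)], and D_n[ζ ↦ ζ^{−κ} f(ζ)] = (−1)^{κn} (1/(2πi))^κ ∮_{|λ_1|=1} ⋯ ∮_{|λ_κ|=1} (∏_{j=1}^κ λ_j^{n−1} dλ_j) · D_n[ζ ↦ p_λ(ζ^{−1}) f(ζ)], where p_λ(ζ) := ∏_{j=1}^κ (1 − ζ/λ_j). (The λ-contours may be taken to be circles about 0 of any positive radius; the integrand D_n[p_λ f] is a Laurent polynomial in the λ_j.) -/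

import Mathlib

open MeasureTheory Complex

/-- The `k`-th Fourier coefficient of a function on the unit circle:
`ĝ_k = (1/(2πi)) ∮_{|ζ|=1} g(ζ) ζ^{-k-1} dζ`. -/
noncomputable def fourierCoef (g : ℂ → ℂ) (k : ℤ) : ℂ :=
  (1 / (2 * Real.pi * Complex.I)) * ∮ ζ in C(0, 1), g ζ * ζ ^ (-k - 1)

/-- The `n`-th Toeplitz determinant `D_n[g] = det ( ĝ_{i-j} )_{1 ≤ i,j ≤ n}`. -/
noncomputable def toeplitzDet (n : ℕ) (g : ℂ → ℂ) : ℂ :=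
  Matrix.det (Matrix.of fun i j : Fin n => fourierCoef g ((i : ℤ) - (j : ℤ)))

/-- The `κ`-fold contour integral over unit circles `|λ_j| = 1`, `j = 1, …, κ`
(each circle positively oriented, parametrized by `λ_j = e^{it_j}`, `dλ_j = i e^{it_j} dt_j`). -/
noncomputable def multiCircleInt (κ : ℕ) (F : (Fin κ → ℂ) → ℂ) : ℂ :=
  ∫ t in Set.univ.pi (fun _ : Fin κ => Set.Ioc (0 : ℝ) (2 * Real.pi)),
    (∏ j, (Complex.I * Complex.exp (Complex.I * (t j)))) *
      F (fun j => Complex.exp (Complex.I * (t j)))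

/-- The polynomial `p_λ(ζ) = ∏_{j=1}^κ (1 - ζ/λ_j)`. -/
noncomputable def pLam {κ : ℕ} (lam : Fin κ → ℂ) (ζ : ℂ) : ℂ :=
  ∏ j, (1 - ζ / lam j)

namespace FHaux


open intervalIntegral in
lemma circle_char (m : ℤ) :
    (∫ u in (0:ℝ)..(2*Real.pi), Complex.I * Complex.exp (Complex.I * m * u)) =
      if m = 0 then 2*Real.pi*Complex.I else 0 := by
  rcases eq_or_ne m 0 with h|h
  · simp [h, real_smul, mul_comm]
  · rw [if_neg h]
    have hc : (Complex.I * (m:ℂ)) ≠ 0 :=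
      mul_ne_zero Complex.I_ne_zero (by exact_mod_cast h)
    have : ∀ u : ℝ, Complex.I * m * (u:ℂ) = (Complex.I * m) * u := fun u => by ring
    rw [intervalIntegral.integral_const_mul, integral_exp_mul_complex hc]
    have h1 : Complex.exp (Complex.I * (m:ℂ) * ((2*Real.pi:ℝ):ℂ)) = 1 := by
      rw [show (Complex.I * (m:ℂ) * ((2*Real.pi:ℝ):ℂ)) = (m:ℂ) * (2*Real.pi*Complex.I) by
        push_cast; ring]
      exact Complex.exp_int_mul_two_pi_mul_I m
    rw [h1]
    simp

lemma fourierCoef_eq (g : ℂ → ℂ) (k : ℤ) :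
    fourierCoef g k = (1 / (2 * Real.pi * Complex.I)) *
      ∫ θ in (0:ℝ)..(2*Real.pi), (circleMap 0 1 θ * Complex.I) *
        (g (circleMap 0 1 θ) * (circleMap 0 1 θ) ^ (-k-1)) := by
  simp only [fourierCoef, circleIntegral, deriv_circleMap, smul_eq_mul]

lemma fc_shift (g : ℂ → ℂ) (m k : ℤ) :
    fourierCoef (fun ζ => ζ ^ m * g ζ) k = fourierCoef g (k - m) := by
  rw [fourierCoef_eq, fourierCoef_eq]
  congr 1
  refine intervalIntegral.integral_congr fun θ _ => ?_
  have hz : circleMap 0 1 θ ≠ 0 := circleMap_ne_center one_ne_zero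
  rw [show -(k - m) - 1 = m + (-k - 1) by ring, zpow_add₀ hz]
  ring



variable (f : ℂ → ℂ)

lemma contf (hf : ContinuousOn f (Metric.sphere (0 : ℂ) 1)) :
    Continuous fun θ : ℝ => f (circleMap 0 1 θ) :=
  hf.comp_continuous (continuous_circleMap 0 1) fun θ =>
    circleMap_mem_sphere 0 zero_le_one θ

lemma contG (hf : ContinuousOn f (Metric.sphere (0 : ℂ) 1)) (e : ℤ) :
    Continuous fun θ : ℝ =>
      (circleMap 0 1 θ * Complex.I) * (f (circleMap 0 1 θ) * (circleMap 0 1 θ) ^ e) := by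
  have h0 : ∀ θ : ℝ, circleMap 0 1 θ ≠ 0 := fun θ => circleMap_ne_center one_ne_zero
  exact ((continuous_circleMap 0 1).mul continuous_const).mul
    ((contf f hf).mul ((continuous_circleMap 0 1).zpow₀ e fun θ => Or.inl (h0 θ)))

lemma two_pi_I_ne : (2 * Real.pi * Complex.I : ℂ) ≠ 0 := by
  simp [Real.pi_ne_zero, Complex.I_ne_zero, Complex.ofReal_ne_zero]

lemma G_int (k : ℤ) :
    (∫ θ in (0:ℝ)..(2*Real.pi), (circleMap 0 1 θ * Complex.I) *
      (f (circleMap 0 1 θ) * (circleMap 0 1 θ) ^ (-k-1)))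
    = (2*Real.pi*Complex.I) * fourierCoef f k := by
  rw [fourierCoef_eq]
  field_simp [two_pi_I_ne]
  congr 1; funext θ; ring

lemma pLam_expand {κ : ℕ} (lam : Fin κ → ℂ) (w : ℂ) :
    pLam lam w = ∑ S : Finset (Fin κ),
      ((-1:ℂ)^S.card * ∏ j ∈ S, (lam j)⁻¹) * w ^ S.card := by
  unfold pLam
  have h1 : ∀ j, (1 : ℂ) - w / lam j = -(w * (lam j)⁻¹) + 1 := fun j => by
    rw [div_eq_mul_inv]; ring
  simp_rw [h1]
  rw [Finset.prod_add]
  rw [Finset.powerset_univ]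
  refine Finset.sum_congr rfl fun S _ => ?_
  have h2 : ∀ j ∈ S, -(w * (lam j)⁻¹) = ((-1 : ℂ) * w) * (lam j)⁻¹ := fun j _ => by ring
  rw [Finset.prod_congr rfl h2, Finset.prod_mul_distrib, Finset.prod_const, mul_pow]
  simp [mul_comm, mul_assoc, mul_left_comm]

lemma fc_p (hf : ContinuousOn f (Metric.sphere (0 : ℂ) 1)) {κ : ℕ} (s : ℤ)
    (lam : Fin κ → ℂ) (k : ℤ) :
    fourierCoef (fun ζ => pLam lam (ζ ^ s) * f ζ) k
      = ∑ S : Finset (Fin κ), ((-1:ℂ)^S.card * ∏ j ∈ S, (lam j)⁻¹) *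
          fourierCoef f (k - s * S.card) := by
  rw [fourierCoef_eq]
  have hpt : Set.EqOn (fun θ : ℝ => (circleMap 0 1 θ * Complex.I) *
      ((fun ζ => pLam lam (ζ ^ s) * f ζ) (circleMap 0 1 θ) * (circleMap 0 1 θ) ^ (-k-1)))
      (fun θ : ℝ => ∑ S : Finset (Fin κ), ((-1:ℂ)^S.card * ∏ j ∈ S, (lam j)⁻¹) *
          ((circleMap 0 1 θ * Complex.I) *
            (f (circleMap 0 1 θ) * (circleMap 0 1 θ) ^ (-(k - s * S.card)-1))))
      (Set.uIcc (0:ℝ) (2*Real.pi)) := by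
    intro θ _
    have hz : circleMap 0 1 θ ≠ 0 := circleMap_ne_center one_ne_zero
    set z := circleMap 0 1 θ with hzdef
    simp only [pLam_expand]
    rw [Finset.sum_mul, Finset.sum_mul, Finset.mul_sum]
    refine Finset.sum_congr rfl fun S _ => ?_
    have hzp : (z ^ s) ^ (S.card) * z ^ (-k-1) = z ^ (-(k - s*S.card) - 1) := by
      rw [← zpow_natCast (z ^ s), ← zpow_mul, ← zpow_add₀ hz]
      congr 1
      push_cast
      ring
    rw [← hzp]
    ring
  rw [intervalIntegral.integral_congr hpt,
    intervalIntegral.integral_finset_sum (f := fun (S : Finset (Fin κ)) (θ : ℝ) =>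
      ((-1:ℂ)^S.card * ∏ j ∈ S, (lam j)⁻¹) * ((circleMap 0 1 θ * Complex.I) *
        (f (circleMap 0 1 θ) * (circleMap 0 1 θ) ^ (-(k - s * S.card)-1)))) (fun S _ =>
      (continuous_const.mul (contG f hf _)).intervalIntegrable _ _)]
  rw [Finset.mul_sum]
  refine Finset.sum_congr rfl fun S _ => ?_
  rw [intervalIntegral.integral_const_mul, G_int f]
  rw [mul_left_comm, one_div, inv_mul_cancel_left₀ two_pi_I_ne]



def cnt {κ n : ℕ} (T : Fin n → Finset (Fin κ)) (j : Fin κ) : ℕ :=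
  (Finset.univ.filter fun i => j ∈ T i).card

lemma coef_factor {κ n : ℕ} (lam : Fin κ → ℂ) (T : Fin n → Finset (Fin κ)) :
    (∏ i, ((-1:ℂ)^(T i).card * ∏ j ∈ T i, (lam j)⁻¹))
      = (-1)^(∑ i, (T i).card) * ∏ j, ((lam j)⁻¹)^(cnt T j) := by
  rw [Finset.prod_mul_distrib, Finset.prod_pow_eq_pow_sum]
  congr 1
  calc ∏ i, ∏ j ∈ T i, (lam j)⁻¹
      = ∏ i, ∏ j, (if j ∈ T i then (lam j)⁻¹ else 1) := by
        refine Finset.prod_congr rfl fun i _ => ?_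
        rw [Finset.prod_ite_mem, Finset.univ_inter]
    _ = ∏ j, ∏ i, (if j ∈ T i then (lam j)⁻¹ else 1) := Finset.prod_comm
    _ = ∏ j, ((lam j)⁻¹)^(cnt T j) := by
        refine Finset.prod_congr rfl fun j _ => ?_
        rw [Finset.prod_ite, Finset.prod_const, Finset.prod_const, one_pow, mul_one]
        rfl

lemma toeplitz_expand (hf : ContinuousOn f (Metric.sphere (0 : ℂ) 1))
    {κ n : ℕ} (s : ℤ) (lam : Fin κ → ℂ) :
    toeplitzDet n (fun ζ => pLam lam (ζ ^ s) * f ζ)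
      = ∑ p : Equiv.Perm (Fin n) × (Fin n → Finset (Fin κ)),
          (((Equiv.Perm.sign p.1 : ℤ) : ℂ) * (-1)^(∑ i, (p.2 i).card) *
              ∏ i, fourierCoef f (((p.1 i : ℕ) : ℤ) - ((i : ℕ) : ℤ) - s * (p.2 i).card)) *
            ∏ j, ((lam j)⁻¹)^(cnt p.2 j) := by
  rw [toeplitzDet, Matrix.det_apply', Fintype.sum_prod_type]
  refine Finset.sum_congr rfl fun σ _ => ?_
  simp only [Matrix.of_apply, fc_p f hf s lam]
  rw [Finset.prod_univ_sum, Fintype.piFinset_univ, Finset.mul_sum]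
  refine Finset.sum_congr rfl fun T _ => ?_
  rw [Finset.prod_mul_distrib, coef_factor]
  ring

lemma integrableOn_box {κ : ℕ} {g : (Fin κ → ℝ) → ℂ} (hg : Continuous g) :
    IntegrableOn g (Set.univ.pi fun _ : Fin κ => Set.Ioc (0:ℝ) (2*Real.pi)) :=
  ((hg.continuousOn).integrableOn_compact (isCompact_univ_pi fun _ => isCompact_Icc)).mono_set
    (Set.pi_mono fun i _ => Set.Ioc_subset_Icc_self)

lemma box_prod {κ : ℕ} (h : Fin κ → ℝ → ℂ) :
    (∫ t in Set.univ.pi fun _ : Fin κ => Set.Ioc (0:ℝ) (2*Real.pi), ∏ j, h j (t j))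
      = ∏ j, ∫ u in Set.Ioc (0:ℝ) (2*Real.pi), h j u := by
  rw [← MeasureTheory.integral_indicator (MeasurableSet.univ_pi fun _ => measurableSet_Ioc)]
  have hind : (Set.univ.pi fun _ : Fin κ => Set.Ioc (0:ℝ) (2*Real.pi)).indicator
        (fun t => ∏ j, h j (t j))
      = fun t => ∏ j, (Set.Ioc (0:ℝ) (2*Real.pi)).indicator (h j) (t j) := by
    funext t
    by_cases ht : t ∈ Set.univ.pi fun _ : Fin κ => Set.Ioc (0:ℝ) (2*Real.pi)
    · rw [Set.indicator_of_mem ht]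
      exact (Finset.prod_congr rfl fun j _ =>
        Set.indicator_of_mem (ht j (Set.mem_univ j)) (h j)).symm
    · rw [Set.indicator_of_notMem ht]
      obtain ⟨j, hj⟩ : ∃ j, t j ∉ Set.Ioc (0:ℝ) (2*Real.pi) := by
        simpa [Set.mem_pi] using ht
      exact (Finset.prod_eq_zero (Finset.mem_univ j)
        (Set.indicator_of_notMem hj (h j))).symm
  rw [hind, MeasureTheory.integral_fintype_prod_volume_eq_prod
    (f := fun j => (Set.Ioc (0:ℝ) (2*Real.pi)).indicator (h j))]
  exact Finset.prod_congr rfl fun j _ =>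
    MeasureTheory.integral_indicator measurableSet_Ioc

lemma hExp {n : ℕ} (hn : 1 ≤ n) (c : ℕ) (u : ℝ) :
    Complex.I * Complex.exp (Complex.I * u) * (Complex.exp (Complex.I*u))^(n-1) *
      ((Complex.exp (Complex.I*u))⁻¹)^c
      = Complex.I * Complex.exp (Complex.I * ((n:ℤ) - c) * u) := by
  rw [← Complex.exp_neg, ← Complex.exp_nat_mul, ← Complex.exp_nat_mul,
    mul_assoc, mul_assoc, ← Complex.exp_add, ← Complex.exp_add]
  congr 2
  push_cast [Nat.cast_sub hn]
  ring



lemma key (hf : ContinuousOn f (Metric.sphere (0 : ℂ) 1)) (κ n : ℕ) (hn : 1 ≤ n) (s : ℤ) :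
    multiCircleInt κ (fun lam =>
        (∏ j, lam j ^ (n - 1)) * toeplitzDet n (fun ζ => pLam lam (ζ ^ s) * f ζ))
      = (2*Real.pi*Complex.I)^κ * (-1)^(κ*n) *
          toeplitzDet n (fun ζ => ζ ^ (s*κ) * f ζ) := by
  classical
  set K : Equiv.Perm (Fin n) × (Fin n → Finset (Fin κ)) → ℂ := fun p =>
    ((Equiv.Perm.sign p.1 : ℤ) : ℂ) * (-1)^(∑ i, (p.2 i).card) *
      ∏ i, fourierCoef f (((p.1 i : ℕ) : ℤ) - ((i : ℕ) : ℤ) - s * (p.2 i).card) with hK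
  have hpoint : ∀ t : Fin κ → ℝ,
      (∏ j, (Complex.I * Complex.exp (Complex.I * t j))) *
        ((∏ j, Complex.exp (Complex.I * t j) ^ (n-1)) *
          toeplitzDet n (fun ζ => pLam (fun j => Complex.exp (Complex.I * t j)) (ζ ^ s) * f ζ))
      = ∑ p : Equiv.Perm (Fin n) × (Fin n → Finset (Fin κ)),
          K p * ∏ j, (Complex.I * Complex.exp (Complex.I * ((n:ℤ) - cnt p.2 j) * t j)) := by
    intro t
    rw [toeplitz_expand f hf s, Finset.mul_sum, Finset.mul_sum]
    refine Finset.sum_congr rfl fun p _ => ?_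
    simp only [← hExp hn, Finset.prod_mul_distrib]
    rw [hK]
    ring
  have hgoal1 : multiCircleInt κ (fun lam =>
        (∏ j, lam j ^ (n - 1)) * toeplitzDet n (fun ζ => pLam lam (ζ ^ s) * f ζ))
      = ∑ p : Equiv.Perm (Fin n) × (Fin n → Finset (Fin κ)),
          K p * ∏ j, (if ((n:ℤ) - cnt p.2 j) = 0 then 2*Real.pi*Complex.I else 0) := by
    rw [multiCircleInt]
    rw [show (fun t : Fin κ → ℝ =>
        (∏ j, (Complex.I * Complex.exp (Complex.I * (t j)))) *
          ((∏ j, Complex.exp (Complex.I * t j) ^ (n-1)) *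
            toeplitzDet n (fun ζ => pLam (fun j => Complex.exp (Complex.I * t j)) (ζ ^ s) * f ζ)))
        = fun t => ∑ p : Equiv.Perm (Fin n) × (Fin n → Finset (Fin κ)),
            K p * ∏ j, (Complex.I * Complex.exp (Complex.I * ((n:ℤ) - cnt p.2 j) * t j))
      from funext hpoint]
    rw [MeasureTheory.integral_finset_sum _ (fun p _ => integrableOn_box
      (by
        refine continuous_const.mul (continuous_finset_prod _ fun j _ => ?_)
        exact continuous_const.mul (Complex.continuous_exp.comp
          ((continuous_const.mul ((Complex.continuous_ofReal.comp (continuous_apply j))))))))]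
    refine Finset.sum_congr rfl fun p _ => ?_
    rw [MeasureTheory.integral_const_mul,
      box_prod (fun j u => Complex.I * Complex.exp (Complex.I * ((n:ℤ) - cnt p.2 j) * u))]
    congr 1
    refine Finset.prod_congr rfl fun j _ => ?_
    rw [← intervalIntegral.integral_of_le Real.two_pi_pos.le]
    simp_rw [show ∀ x:ℝ, (Complex.I * ((((n:ℤ):ℂ)) - ((cnt p.2 j :ℕ):ℂ)) * (x:ℂ)) =
      Complex.I * ((((n:ℤ) - cnt p.2 j : ℤ)):ℂ) * (x:ℂ) from fun x => by push_cast; ring]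
    exact circle_char _
  rw [hgoal1]
  have hterm : ∀ p : Equiv.Perm (Fin n) × (Fin n → Finset (Fin κ)),
      K p * ∏ j, (if ((n:ℤ) - cnt p.2 j) = 0 then 2*Real.pi*Complex.I else 0)
      = if p.2 = (fun _ => Finset.univ) then K p * (2*Real.pi*Complex.I)^κ else 0 := by
    intro p
    by_cases hT : p.2 = fun _ => Finset.univ
    · rw [if_pos hT, hT]
      congr 1
      have hc : ∀ j : Fin κ, cnt (fun _ : Fin n => (Finset.univ : Finset (Fin κ))) j = n := by
        intro j
        simp [cnt]
      simp [hc]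
    · rw [if_neg hT]
      obtain ⟨i0, hi0⟩ := Function.ne_iff.mp hT
      obtain ⟨j0, hj0⟩ : ∃ j0, j0 ∉ p.2 i0 := by
        by_contra hcon
        push_neg at hcon
        exact hi0 (Finset.eq_univ_iff_forall.mpr hcon)
      have hlt : cnt p.2 j0 < n := by
        have hss : (Finset.univ.filter fun i => j0 ∈ p.2 i) ⊂ Finset.univ := by
          refine Finset.ssubset_univ_iff.mpr fun hcon => ?_
          have h1 : i0 ∈ Finset.univ.filter fun i => j0 ∈ p.2 i := by
            rw [hcon]; exact Finset.mem_univ i0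
          exact hj0 (Finset.mem_filter.mp h1).2
        simpa [cnt, Finset.card_univ] using Finset.card_lt_card hss
      have hne : ((n:ℤ) - cnt p.2 j0) ≠ 0 := by
        omega
      have h0 : (∏ j, if ((n:ℤ) - cnt p.2 j) = 0 then 2*Real.pi*Complex.I else 0) = 0 :=
        Finset.prod_eq_zero (Finset.mem_univ j0) (if_neg hne)
      rw [h0, mul_zero]
  rw [Finset.sum_congr rfl fun p _ => hterm p]
  rw [Fintype.sum_prod_type]
  simp only [Finset.sum_ite_eq' Finset.univ (fun _ => Finset.univ : Fin n → Finset (Fin κ)),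
    Finset.mem_univ, if_true]
  have hfin : ∀ σ : Equiv.Perm (Fin n),
      K (σ, fun _ => Finset.univ) = ((Equiv.Perm.sign σ : ℤ) : ℂ) * (-1)^(κ*n) *
        ∏ i, fourierCoef f (((σ i : ℕ) : ℤ) - ((i : ℕ) : ℤ) - s * κ) := by
    intro σ
    have h1 : (∑ _i : Fin n, κ) = κ * n := by
      simp [mul_comm]
    simp only [hK, Finset.card_univ, Fintype.card_fin, h1]
  simp only [hfin]
  rw [toeplitzDet, Matrix.det_apply']
  simp only [Matrix.of_apply, fc_shift f (s*κ)]
  rw [Finset.mul_sum]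
  refine Finset.sum_congr rfl fun σ _ => ?_
  push_cast
  ring


lemma const_cancel (κ n : ℕ) (X : ℂ) :
    (-1:ℂ)^(κ*n) * (1/(2*Real.pi*Complex.I))^κ *
      ((2*Real.pi*Complex.I)^κ * (-1)^(κ*n) * X) = X := by
  have hX : (1 / (2*Real.pi*Complex.I) : ℂ)^κ * (2*Real.pi*Complex.I)^κ = 1 := by
    rw [← mul_pow, one_div, inv_mul_cancel₀ two_pi_I_ne, one_pow]
  have hS : ((-1:ℂ))^(κ*n) * ((-1:ℂ))^(κ*n) = 1 := by
    rw [← pow_add]; exact Even.neg_one_pow ⟨κ*n, by ring⟩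
  calc (-1:ℂ)^(κ*n) * (1/(2*Real.pi*Complex.I))^κ *
        ((2*Real.pi*Complex.I)^κ * (-1)^(κ*n) * X)
      = (((-1:ℂ))^(κ*n) * ((-1:ℂ))^(κ*n)) *
          ((1 / (2*Real.pi*Complex.I) : ℂ)^κ * (2*Real.pi*Complex.I)^κ) * X := by ring
    _ = X := by rw [hX, hS, one_mul, one_mul]

end FHaux

/-- **Resolution of a Fisher–Hartwig type singularity in Toeplitz determinants**
(Lemma 4.2 in Adler–Johansson–van Moerbeke): for `f` continuous on the unit circle and
integers `κ, n ≥ 1`,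
`D_n[ζ^{±κ} f(ζ)] = (-1)^{κn} (1/(2πi))^κ ∮⋯∮ (∏ λ_j^{n-1} dλ_j) · D_n[p_λ(ζ^{±1}) f(ζ)]`. -/
theorem fisher_hartwig_resolution (f : ℂ → ℂ)
    (hf : ContinuousOn f (Metric.sphere (0 : ℂ) 1))
    (κ n : ℕ) (hκ : 1 ≤ κ) (hn : 1 ≤ n) :
    toeplitzDet n (fun ζ => ζ ^ κ * f ζ)
        = (-1) ^ (κ * n) * (1 / (2 * Real.pi * Complex.I)) ^ κ *
            multiCircleInt κ (fun lam =>
              (∏ j, lam j ^ (n - 1)) * toeplitzDet n (fun ζ => pLam lam ζ * f ζ)) ∧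
    toeplitzDet n (fun ζ => ζ ^ (-(κ : ℤ)) * f ζ)
        = (-1) ^ (κ * n) * (1 / (2 * Real.pi * Complex.I)) ^ κ *
            multiCircleInt κ (fun lam =>
              (∏ j, lam j ^ (n - 1)) * toeplitzDet n (fun ζ => pLam lam ζ⁻¹ * f ζ)) := by
  constructor
  · have hkey := FHaux.key f hf κ n hn 1
    simp only [zpow_one, one_mul, zpow_natCast] at hkey
    rw [hkey, FHaux.const_cancel]
  · have hkey := FHaux.key f hf κ n hn (-1)
    simp only [zpow_neg_one, neg_mul, one_mul] at hkey
    rw [hkey, FHaux.const_cancel]
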